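/- Let G be a finite simple connected graph of order n with dim(G) = res(G) = k where k ≥ 2. Then C(n, k−1) ≤ C(n, 2), where C denotes the binomial coefficient. -/

import Mathlib

/-- `S` is a resolving set of `G`: every pair of distinct vertices is resolved
by some vertex of `S`, i.e. some `u ∈ S` has different distances to the two vertices. -/
def IsResolvingSet {V : Type*} (G : SimpleGraph V) (S : Set V) : Prop :=
  ∀ x y : V, x ≠ y → ∃ u ∈ S, G.dist u x ≠ G.dist u y

/-- The metric dimension of `G`: minimum size of a resolving set. -/
noncomputable def metricDim {V : Type*} [Fintype V] (G : SimpleGraph V) : ℕ :=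
  sInf {k | ∃ S : Finset V, S.card = k ∧ IsResolvingSet G ↑S}

/-- The upper dimension of `G`: maximum size of a minimal resolving set. -/
noncomputable def upperDim {V : Type*} [Fintype V] (G : SimpleGraph V) : ℕ :=
  sSup {k | ∃ S : Finset V, S.card = k ∧ IsResolvingSet G ↑S ∧
    ∀ T : Finset V, T ⊂ S → ¬ IsResolvingSet G ↑T}

/-- The resolving number of `G`: minimum `k` such that every `k`-subset of
the vertex set is a resolving set. -/
noncomputable def resolvingNumber {V : Type*} [Fintype V] (G : SimpleGraph V) : ℕ :=
  sInf {k | ∀ S : Finset V, S.card = k → IsResolvingSet G ↑S}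

/-- if `G` is a finite simple connected graph of order `n` with
`dim(G) = res(G) = k` and `k ≥ 2`, then `C(n, k-1) ≤ C(n, 2)`. -/
theorem stmt6 {V : Type*} [Fintype V] [DecidableEq V] (G : SimpleGraph V)
    (hconn : G.Connected) (n k : ℕ) (hn : Fintype.card V = n) (hk : 2 ≤ k)
    (hdim : metricDim G = k) (hres : resolvingNumber G = k) :
    n.choose (k - 1) ≤ n.choose 2 := by
  classical
  subst hn
  -- the whole vertex set is resolving
  have huniv : IsResolvingSet G (↑(Finset.univ : Finset V)) := by
    intro x y hxy
    refine ⟨x, by simp, ?_⟩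
    rw [SimpleGraph.dist_self]
    exact fun h0 => hxy (hconn.dist_eq_zero_iff.mp h0.symm)
  -- every k-subset is resolving
  have hresmem : ∀ S : Finset V, S.card = k → IsResolvingSet G ↑S := by
    have hmem : resolvingNumber G ∈
        {m | ∀ S : Finset V, S.card = m → IsResolvingSet G ↑S} := by
      apply Nat.sInf_mem
      exact ⟨Fintype.card V, fun S hS => by
        rw [(Finset.card_eq_iff_eq_univ S).mp (by simpa using hS)]
        exact huniv⟩
    rwa [hres] at hmem
  -- no resolving set of size < k
  have hdimle : ∀ S : Finset V, IsResolvingSet G ↑S → k ≤ S.card := by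
    intro S hS
    rw [← hdim]
    exact Nat.sInf_le ⟨S, rfl, hS⟩
  -- k ≤ n
  have hkn : k ≤ Fintype.card V := by
    have hmem : metricDim G ∈
        {m | ∃ S : Finset V, S.card = m ∧ IsResolvingSet G ↑S} :=
      Nat.sInf_mem ⟨Fintype.card V, Finset.univ, by simp, huniv⟩
    rw [hdim] at hmem
    obtain ⟨S, hS, _⟩ := hmem
    rw [← hS]; exact Finset.card_le_univ S
  -- the non-resolving set of a pair
  set F : V → V → Finset V :=
    fun x y => Finset.univ.filter (fun u => G.dist u x = G.dist u y) with hF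
  have hFsymm : ∀ x y, F x y = F y x := by
    intro x y
    ext u
    simp only [hF, Finset.mem_filter, Finset.mem_univ, true_and]
    exact ⟨Eq.symm, Eq.symm⟩
  have hFcard : ∀ x y : V, x ≠ y → (F x y).card ≤ k - 1 := by
    intro x y hxy
    by_contra hc
    push_neg at hc
    have hk' : k ≤ (F x y).card := by omega
    obtain ⟨T, hTsub, hTcard⟩ := Finset.exists_subset_card_eq hk'
    obtain ⟨u, huT, hune⟩ := hresmem T hTcard x y hxy
    have : u ∈ F x y := hTsub huT
    simp only [hF, Finset.mem_filter] at this
    exact hune this.2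
  -- every (k-1)-set equals F x y for some pair
  have key : ∀ S : Finset V, S.card = k - 1 → ∃ x y : V, x ≠ y ∧ S = F x y := by
    intro S hS
    have hnres : ¬ IsResolvingSet G ↑S := by
      intro hres'
      have := hdimle S hres'
      omega
    simp only [IsResolvingSet, not_forall] at hnres
    obtain ⟨x, y, hxy, hall⟩ := hnres
    push_neg at hall
    refine ⟨x, y, hxy, ?_⟩
    have hsub : S ⊆ F x y := by
      intro u hu
      simp only [hF, Finset.mem_filter, Finset.mem_univ, true_and]
      exact hall u hu
    exact (Finset.eq_of_subset_of_card_le hsub (by rw [hS]; exact hFcard x y hxy))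
  -- build the injection
  have hNeV : Nonempty V := Fintype.card_pos_iff.mp (by omega)
  have hIV : Inhabited V := Classical.inhabited_of_nonempty hNeV
  choose! xf yf hne hSeq using key
  have hinj : ((Finset.univ : Finset V).powersetCard (k-1)).card ≤
      ((Finset.univ : Finset V).powersetCard 2).card := by
    apply Finset.card_le_card_of_injOn (fun S => {xf S, yf S})
    · intro S hS
      simp only [Finset.mem_coe, Finset.mem_powersetCard_univ] at hS ⊢
      exact Finset.card_pair (hne S hS)
    · intro S hS S' hS' hpair0
      have hpair : ({xf S, yf S} : Finset V) = {xf S', yf S'} := hpair0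
      simp only [Finset.mem_coe, Finset.mem_powersetCard_univ] at hS hS'
      have hx : xf S = xf S' ∨ xf S = yf S' := by
        have : xf S ∈ ({xf S', yf S'} : Finset V) := by
          rw [← hpair]; simp
        simpa using this
      have hy : yf S = xf S' ∨ yf S = yf S' := by
        have : yf S ∈ ({xf S', yf S'} : Finset V) := by
          rw [← hpair]; simp
        simpa using this
      have hneS := hne S hS
      have h1 := hSeq S hS
      have h2 := hSeq S' hS'
      rcases hx with hx | hx
      · rcases hy with hy | hy
        · exact absurd (hx.trans hy.symm) hneS
        · rw [h1, h2, hx, hy]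
      · rcases hy with hy | hy
        · rw [h1, h2, hx, hy, hFsymm]
        · exact absurd (hx.trans hy.symm) hneS
  rwa [Finset.card_powersetCard, Finset.card_powersetCard, Finset.card_univ] at hinj
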